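/- If the formula φ is satisfiable, then there exists a reconfiguration sequence from p_b to p_e in G_φ of length at most 2m(n+2). -/

import Mathlib

/-- Vertices of the graph `G_φ` (for a CNF formula with `n` variables and `m` clauses):
`s`, `t`, the vertices `beg_{j+1}` and `end_{j+1}` (for `j : Fin (2m)`), and the gadget
vertices `v(i+1, vs, cs, j+1)` (for `i : Fin n`, `vs cs : Bool`, `j : Fin (2m)`).
An index `i : Fin n` encodes level `i+1`, and `j : Fin (2m)` encodes depth `j+1`. -/
inductive PVert (n m : ℕ) : Type where
  | s : PVert n m
  | t : PVert n m
  | beg (j : Fin (2 * m)) : PVert n m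
  | en (j : Fin (2 * m)) : PVert n m
  | v (i : Fin n) (vs : Bool) (cs : Bool) (j : Fin (2 * m)) : PVert n m
deriving DecidableEq

/-- The depth of a vertex of `G_φ`. -/
def PVert.depth {n m : ℕ} : PVert n m → ℕ
  | PVert.s => 0
  | PVert.t => 2 * m + 1
  | PVert.beg j => (j : ℕ) + 1
  | PVert.en j => (j : ℕ) + 1
  | PVert.v _ _ _ j => (j : ℕ) + 1

/-- The level of a vertex of `G_φ` (`beg`-vertices have level `0`, `end`-vertices have
level `n+1`, the gadget vertex `v(i,vs,cs,j)` has level `i`; junk value `0` for `s`,`t`). -/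
def PVert.level {n m : ℕ} : PVert n m → ℕ
  | PVert.beg _ => 0
  | PVert.en _ => n + 1
  | PVert.v i _ _ _ => (i : ℕ) + 1
  | _ => 0

/-- The c-state of a vertex of `G_φ` (`beg`-vertices have c-state `0`, `end`-vertices have
c-state `1`, the gadget vertex `v(i,vs,cs,j)` has c-state `cs`; junk value `0` for `s`,`t`). -/
def PVert.cstate {n m : ℕ} : PVert n m → ℕ
  | PVert.beg _ => 0
  | PVert.en _ => 1
  | PVert.v _ _ cs _ => cond cs 1 0
  | _ => 0

/-- The (directed) edges of `G_φ`.  The CNF formula `φ` is recorded by its clauses: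
`(i, vs) ∈ φ jc` means that clause `C_{jc+1}` contains the literal asserting `x_{i+1} = vs`,
i.e. that setting `x_{i+1} = vs` satisfies clause `C_{jc+1}`. -/
def PEdge (n m : ℕ) (φ : Fin m → Finset (Fin n × Bool)) (a b : PVert n m) : Prop :=
  -- (a) gadget edges, same c-state: from depth j to depth j+1 inside a gadget
  (∃ (i : Fin n) (vs cs : Bool) (j j' : Fin (2 * m)), (j' : ℕ) = (j : ℕ) + 1 ∧
      a = PVert.v i vs cs j ∧ b = PVert.v i vs cs j') ∨
  -- (a) gadget edges, crossing: from even depth 2j to odd depth 2j+1, flipping the c-state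
  (∃ (i : Fin n) (vs cs : Bool) (j j' : Fin (2 * m)), (j' : ℕ) = (j : ℕ) + 1 ∧
      (j : ℕ) % 2 = 1 ∧ a = PVert.v i vs cs j ∧ b = PVert.v i vs (!cs) j') ∨
  -- (b) formula edges: from v(i,vs,1,2jc-1) to v(i,vs,0,2jc) when x_i = vs satisfies C_jc
  (∃ (i : Fin n) (vs : Bool) (j j' : Fin (2 * m)) (jc : Fin m), (j' : ℕ) = (j : ℕ) + 1 ∧
      (j : ℕ) = 2 * (jc : ℕ) ∧ (i, vs) ∈ φ jc ∧
      a = PVert.v i vs true j ∧ b = PVert.v i vs false j') ∨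
  -- (c) inter-level edges, same c-state: from level i+1, depth j-1 to level i, depth j
  (∃ (ihi ilo : Fin n) (vs' vs cs : Bool) (j j' : Fin (2 * m)), (ihi : ℕ) = (ilo : ℕ) + 1 ∧
      (j' : ℕ) = (j : ℕ) + 1 ∧ a = PVert.v ihi vs' cs j ∧ b = PVert.v ilo vs cs j') ∨
  -- (c) inter-level edges, crossing: from level i+1, even depth 2j to level i, depth 2j+1
  (∃ (ihi ilo : Fin n) (vs' vs cs : Bool) (j j' : Fin (2 * m)), (ihi : ℕ) = (ilo : ℕ) + 1 ∧
      (j' : ℕ) = (j : ℕ) + 1 ∧ (j : ℕ) % 2 = 1 ∧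
      a = PVert.v ihi vs' cs j ∧ b = PVert.v ilo vs (!cs) j') ∨
  -- (d) the begin path
  (∃ (j j' : Fin (2 * m)), (j' : ℕ) = (j : ℕ) + 1 ∧ a = PVert.beg j ∧ b = PVert.beg j') ∨
  -- (d) the end path
  (∃ (j j' : Fin (2 * m)), (j' : ℕ) = (j : ℕ) + 1 ∧ a = PVert.en j ∧ b = PVert.en j') ∨
  -- (d) from v(1,vs,0,j) to beg_{j+1}
  (∃ (i : Fin n) (vs : Bool) (j j' : Fin (2 * m)), (i : ℕ) = 0 ∧ (j' : ℕ) = (j : ℕ) + 1 ∧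
      a = PVert.v i vs false j ∧ b = PVert.beg j') ∨
  -- (d) from end_j to v(n,vs,1,j+1)
  (∃ (i : Fin n) (vs : Bool) (j j' : Fin (2 * m)), (i : ℕ) + 1 = n ∧ (j' : ℕ) = (j : ℕ) + 1 ∧
      a = PVert.en j ∧ b = PVert.v i vs true j') ∨
  -- edges from s to every vertex of depth 1
  (a = PVert.s ∧ b.depth = 1) ∨
  -- edges from every vertex of depth 2m to t
  (a.depth = 2 * m ∧ b = PVert.t)

/-- A shortest `(s,t)`-path in `G_φ`: a directed path from `s` to `t` with `2m+2` vertices,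
one vertex of each depth `0, 1, …, 2m+1`. -/
def IsStPath (n m : ℕ) (φ : Fin m → Finset (Fin n × Bool))
    (p : Fin (2 * m + 1 + 1) → PVert n m) : Prop :=
  p 0 = PVert.s ∧ p (Fin.last (2 * m + 1)) = PVert.t ∧
    (∀ i : Fin (2 * m + 1), PEdge n m φ (p i.castSucc) (p i.succ)) ∧
    (∀ d : Fin (2 * m + 1 + 1), (p d).depth = (d : ℕ))

/-- Two vertex sequences differ in exactly one position. -/
def DiffOne {N : ℕ} {α : Type*} (p q : Fin N → α) : Prop :=
  ∃ i, p i ≠ q i ∧ ∀ j, j ≠ i → p j = q j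

/-- `ρ 0, ρ 1, …, ρ ℓ` is a reconfiguration sequence of length `ℓ` from the shortest
`(s,t)`-path `p` to the shortest `(s,t)`-path `q` in `G_φ`. -/
def PReconfSeq (n m : ℕ) (φ : Fin m → Finset (Fin n × Bool))
    (ρ : ℕ → (Fin (2 * m + 1 + 1) → PVert n m)) (ℓ : ℕ)
    (p q : Fin (2 * m + 1 + 1) → PVert n m) : Prop :=
  ρ 0 = p ∧ ρ ℓ = q ∧ (∀ i ≤ ℓ, IsStPath n m φ (ρ i)) ∧
    ∀ i < ℓ, DiffOne (ρ i) (ρ (i + 1))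

/-- The path `p_b = (s, beg_1, …, beg_{2m}, t)`. -/
def pbP (n m : ℕ) : Fin (2 * m + 1 + 1) → PVert n m := fun d =>
  if h0 : (d : ℕ) = 0 then PVert.s
  else if h1 : (d : ℕ) ≤ 2 * m then PVert.beg ⟨(d : ℕ) - 1, by omega⟩
  else PVert.t

/-- The path `p_e = (s, end_1, …, end_{2m}, t)`. -/
def peP (n m : ℕ) : Fin (2 * m + 1 + 1) → PVert n m := fun d =>
  if h0 : (d : ℕ) = 0 then PVert.s
  else if h1 : (d : ℕ) ≤ 2 * m then PVert.en ⟨(d : ℕ) - 1, by omega⟩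
  else PVert.t

section Aux

variable {n m : ℕ} {φ : Fin m → Finset (Fin n × Bool)}

lemma pedge_gadget_same (i : Fin n) (vs cs : Bool) (j j' : Fin (2*m)) (h : (j':ℕ) = (j:ℕ)+1) :
    PEdge n m φ (PVert.v i vs cs j) (PVert.v i vs cs j') :=
  Or.inl ⟨i, vs, cs, j, j', h, rfl, rfl⟩

lemma pedge_gadget_cross (i : Fin n) (vs cs : Bool) (j j' : Fin (2*m)) (h : (j':ℕ) = (j:ℕ)+1)
    (hp : (j:ℕ) % 2 = 1) : PEdge n m φ (PVert.v i vs cs j) (PVert.v i vs (!cs) j') :=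
  Or.inr (Or.inl ⟨i, vs, cs, j, j', h, hp, rfl, rfl⟩)

lemma pedge_formula (i : Fin n) (vs : Bool) (j j' : Fin (2*m)) (jc : Fin m)
    (h : (j':ℕ) = (j:ℕ)+1) (h2 : (j:ℕ) = 2*(jc:ℕ)) (hmem : (i, vs) ∈ φ jc) :
    PEdge n m φ (PVert.v i vs true j) (PVert.v i vs false j') :=
  Or.inr (Or.inr (Or.inl ⟨i, vs, j, j', jc, h, h2, hmem, rfl, rfl⟩))

lemma pedge_inter_same (ihi ilo : Fin n) (vs' vs cs : Bool) (j j' : Fin (2*m))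
    (hl : (ihi:ℕ) = (ilo:ℕ)+1) (h : (j':ℕ) = (j:ℕ)+1) :
    PEdge n m φ (PVert.v ihi vs' cs j) (PVert.v ilo vs cs j') :=
  Or.inr (Or.inr (Or.inr (Or.inl ⟨ihi, ilo, vs', vs, cs, j, j', hl, h, rfl, rfl⟩)))

lemma pedge_inter_cross (ihi ilo : Fin n) (vs' vs cs : Bool) (j j' : Fin (2*m))
    (hl : (ihi:ℕ) = (ilo:ℕ)+1) (h : (j':ℕ) = (j:ℕ)+1) (hp : (j:ℕ)%2 = 1) :
    PEdge n m φ (PVert.v ihi vs' cs j) (PVert.v ilo vs (!cs) j') :=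
  Or.inr (Or.inr (Or.inr (Or.inr (Or.inl ⟨ihi, ilo, vs', vs, cs, j, j', hl, h, hp, rfl, rfl⟩))))

lemma pedge_beg (j j' : Fin (2*m)) (h : (j':ℕ) = (j:ℕ)+1) :
    PEdge n m φ (PVert.beg j) (PVert.beg j') :=
  Or.inr (Or.inr (Or.inr (Or.inr (Or.inr (Or.inl ⟨j, j', h, rfl, rfl⟩)))))

lemma pedge_en (j j' : Fin (2*m)) (h : (j':ℕ) = (j:ℕ)+1) :
    PEdge n m φ (PVert.en j) (PVert.en j') :=
  Or.inr (Or.inr (Or.inr (Or.inr (Or.inr (Or.inr (Or.inl ⟨j, j', h, rfl, rfl⟩))))))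

lemma pedge_vbeg (i : Fin n) (vs : Bool) (j j' : Fin (2*m)) (hi : (i:ℕ) = 0)
    (h : (j':ℕ) = (j:ℕ)+1) :
    PEdge n m φ (PVert.v i vs false j) (PVert.beg j') :=
  Or.inr (Or.inr (Or.inr (Or.inr (Or.inr (Or.inr (Or.inr (Or.inl ⟨i, vs, j, j', hi, h, rfl, rfl⟩)))))))

lemma pedge_env (i : Fin n) (vs : Bool) (j j' : Fin (2*m)) (hi : (i:ℕ)+1 = n)
    (h : (j':ℕ) = (j:ℕ)+1) :
    PEdge n m φ (PVert.en j) (PVert.v i vs true j') :=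
  Or.inr (Or.inr (Or.inr (Or.inr (Or.inr (Or.inr (Or.inr (Or.inr (Or.inl ⟨i, vs, j, j', hi, h, rfl, rfl⟩))))))))

lemma pedge_s (b : PVert n m) (hb : b.depth = 1) : PEdge n m φ PVert.s b :=
  Or.inr (Or.inr (Or.inr (Or.inr (Or.inr (Or.inr (Or.inr (Or.inr (Or.inr (Or.inl ⟨rfl, hb⟩)))))))))

lemma pedge_t (a : PVert n m) (ha : a.depth = 2*m) : PEdge n m φ a PVert.t :=
  Or.inr (Or.inr (Or.inr (Or.inr (Or.inr (Or.inr (Or.inr (Or.inr (Or.inr (Or.inr ⟨ha, rfl⟩)))))))))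

/-- `q` is reachable from `p` by a reconfiguration sequence of length at most `L`. -/
def Reconf (n m : ℕ) (φ : Fin m → Finset (Fin n × Bool)) (L : ℕ)
    (p q : Fin (2 * m + 1 + 1) → PVert n m) : Prop :=
  ∃ ℓ ≤ L, ∃ ρ, PReconfSeq n m φ ρ ℓ p q

lemma reconf_mono {L L' : ℕ} {p q} (h : Reconf n m φ L p q) (hL : L ≤ L') :
    Reconf n m φ L' p q := by
  obtain ⟨ℓ, hℓ, hρ⟩ := h
  exact ⟨ℓ, le_trans hℓ hL, hρ⟩

lemma reconf_refl {p} (hp : IsStPath n m φ p) : Reconf n m φ 0 p p :=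
  ⟨0, le_rfl, fun _ => p, rfl, rfl, fun _ _ => hp, fun i hi => absurd hi (Nat.not_lt_zero i)⟩

lemma reconf_trans {L1 L2 : ℕ} {p q r} (h1 : Reconf n m φ L1 p q) (h2 : Reconf n m φ L2 q r) :
    Reconf n m φ (L1 + L2) p r := by
  obtain ⟨l1, hl1, ρ1, h10, h11, h1p, h1d⟩ := h1
  obtain ⟨l2, hl2, ρ2, h20, h21, h2p, h2d⟩ := h2
  refine ⟨l1 + l2, by omega, fun k => if k ≤ l1 then ρ1 k else ρ2 (k - l1), ?_, ?_, ?_, ?_⟩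
  · simp [h10]
  · by_cases h : l1 + l2 ≤ l1
    · have hz : l2 = 0 := by omega
      subst hz
      simp only [Nat.add_zero, if_pos (le_refl l1)]
      rw [h11, ← h20]; exact h21
    · simp only [if_neg h]
      have e : l1 + l2 - l1 = l2 := by omega
      rw [e, h21]
  · intro i hi
    by_cases h : i ≤ l1
    · simpa [h] using h1p i h
    · simp only [if_neg h]
      exact h2p (i - l1) (by omega)
  · intro i hi
    by_cases h : i + 1 ≤ l1
    · have h' : i ≤ l1 := by omega
      simp only [if_pos h, if_pos h']
      exact h1d i (by omega)
    · by_cases h' : i ≤ l1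
      · have he : i = l1 := by omega
        subst he
        simp only [if_pos h', if_neg h]
        have e : i + 1 - i = 0 + 1 := by omega
        rw [e, h11, ← h20]
        exact h2d 0 (by omega)
      · simp only [if_neg h', if_neg h]
        have e : i + 1 - l1 = (i - l1) + 1 := by omega
        rw [e]
        exact h2d (i - l1) (by omega)

lemma reconf_single {p q} (hp : IsStPath n m φ p) (hq : IsStPath n m φ q)
    (hd : DiffOne p q) : Reconf n m φ 1 p q := by
  refine ⟨1, le_rfl, fun k => if k = 0 then p else q, rfl, rfl, ?_, ?_⟩
  · intro i hi
    by_cases h : i = 0 <;> simp [h, hp, hq]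
  · intro i hi
    have : i = 0 := by omega
    simpa [this] using hd


lemma reconf_sweep {p q : Fin (2*m+1+1) → PVert n m}
    (hp : IsStPath n m φ p) (hq : IsStPath n m φ q)
    (hbd : ∀ k : Fin (2*m+1), 0 < (k:ℕ) → (k:ℕ) < 2*m → PEdge n m φ (q k.castSucc) (p k.succ))
    (hne : ∀ d : Fin (2*m+1+1), 0 < (d:ℕ) → (d:ℕ) < 2*m+1 → p d ≠ q d) :
    Reconf n m φ (2*m) p q := by
  obtain ⟨hp0, hpl, hpe, hpd⟩ := hp
  obtain ⟨hq0, hql, hqe, hqd⟩ := hq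
  refine ⟨2*m, le_rfl, fun k d => if (d:ℕ) ≤ k then q d else p d, ?_, ?_, ?_, ?_⟩
  · funext d
    show (if (d:ℕ) ≤ 0 then q d else p d) = p d
    by_cases h : (d:ℕ) ≤ 0
    · have hd0 : d = 0 := Fin.ext (by simp only [Fin.val_zero]; omega)
      rw [if_pos h, hd0, hq0, hp0]
    · rw [if_neg h]
  · funext d
    show (if (d:ℕ) ≤ 2*m then q d else p d) = q d
    by_cases h : (d:ℕ) ≤ 2*m
    · rw [if_pos h]
    · have hd : d = Fin.last (2*m+1) := Fin.ext (by simp only [Fin.val_last]; omega)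
      rw [if_neg h, hd, hpl, hql]
  · intro k hk
    refine ⟨?_, ?_, ?_, ?_⟩
    · simpa using hq0
    · have h : ¬(2*m+1 ≤ k) := by omega
      simpa [Fin.val_last, h] using hpl
    · intro i
      have hkc : ((i.castSucc : Fin (2*m+1+1)) : ℕ) = (i:ℕ) := Fin.coe_castSucc i
      have hks : ((i.succ : Fin (2*m+1+1)) : ℕ) = (i:ℕ)+1 := Fin.val_succ i
      by_cases h1 : (i:ℕ)+1 ≤ k
      · have h2 : (i:ℕ) ≤ k := by omega
        simp only [hkc, hks, if_pos h1, if_pos h2]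
        exact hqe i
      · by_cases h2 : (i:ℕ) ≤ k
        · simp only [hkc, hks, if_pos h2, if_neg h1]
          rcases Nat.eq_zero_or_pos (i:ℕ) with h0 | h0
          · have hi0 : (i.castSucc : Fin (2*m+1+1)) = 0 := Fin.ext (by simp [hkc, h0])
            rw [hi0, hq0]
            exact pedge_s _ (by rw [hpd i.succ, hks, h0])
          · by_cases hlt : (i:ℕ) < 2*m
            · exact hbd i h0 hlt
            · have hi : (i:ℕ) = 2*m := by omega
              have hsucc : (i.succ : Fin (2*m+1+1)) = Fin.last (2*m+1) := Fin.ext (by simp [hks, Fin.last, hi])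
              rw [hsucc, hpl]
              exact pedge_t _ (by rw [hqd i.castSucc, hkc, hi])
        · simp only [hkc, hks, if_neg h1, if_neg h2]
          exact hpe i
    · intro d
      by_cases h : (d:ℕ) ≤ k <;> simp [h, hpd d, hqd d]
  · intro k hk
    refine ⟨⟨k+1, by omega⟩, ?_, ?_⟩
    · show (if k+1 ≤ k then q ⟨k+1, by omega⟩ else p ⟨k+1, by omega⟩)
        ≠ (if k+1 ≤ k+1 then q ⟨k+1, by omega⟩ else p ⟨k+1, by omega⟩)
      rw [if_neg (by omega), if_pos (le_refl (k+1))]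
      exact hne ⟨k+1, by omega⟩ (by show 0 < k+1; omega) (by show k+1 < 2*m+1; omega)
    · intro j hj
      show (if (j:ℕ) ≤ k then q j else p j) = (if (j:ℕ) ≤ k+1 then q j else p j)
      have hjv : (j:ℕ) ≠ k+1 := fun hc => hj (Fin.ext hc)
      by_cases h : (j:ℕ) ≤ k
      · rw [if_pos h, if_pos (show (j:ℕ) ≤ k+1 by omega)]
      · rw [if_neg h, if_neg (show ¬((j:ℕ) ≤ k+1) by omega)]

/-- The path at gadget level `i` with variable-state `vs` and c-state pattern `c`. -/
def lvp (n m : ℕ) (i : Fin n) (vs : Bool) (c : Fin (2*m) → Bool) (d : Fin (2*m+1+1)) :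
    PVert n m :=
  if _h0 : (d:ℕ) = 0 then PVert.s
  else if h1 : (d:ℕ) ≤ 2*m then PVert.v i vs (c ⟨(d:ℕ)-1, by omega⟩) ⟨(d:ℕ)-1, by omega⟩
  else PVert.t

lemma lvp_depth (i : Fin n) (vs : Bool) (c : Fin (2*m) → Bool) (d : Fin (2*m+1+1)) :
    (lvp n m i vs c d).depth = (d:ℕ) := by
  unfold lvp
  split_ifs with h1 h2 <;> simp [PVert.depth] <;> omega

/-- A valid c-state pattern for level `i` with variable-state `vs`. -/
def GoodPat (φ : Fin m → Finset (Fin n × Bool)) (i : Fin n) (vs : Bool)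
    (c : Fin (2*m) → Bool) : Prop :=
  ∀ a b : Fin (2*m), (b:ℕ) = (a:ℕ)+1 → (a:ℕ) % 2 = 0 →
    c a = c b ∨ (c a = true ∧ c b = false ∧
      ∀ jc : Fin m, (a:ℕ) = 2*(jc:ℕ) → (i, vs) ∈ φ jc)

/-- A c-state pattern that is constant on clause blocks. -/
def ConstPat {m : ℕ} (c : Fin (2*m) → Bool) : Prop :=
  ∀ a b : Fin (2*m), (b:ℕ) = (a:ℕ)+1 → (a:ℕ) % 2 = 0 → c a = c b

lemma constPat_goodPat {c : Fin (2*m) → Bool} (h : ConstPat c) (i : Fin n) (vs : Bool) :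
    GoodPat φ i vs c := fun a b hb ha => Or.inl (h a b hb ha)

lemma pedge_between {i : Fin n} {vs : Bool} {c : Fin (2*m) → Bool}
    (hc : GoodPat φ i vs c) (ja jb : Fin (2*m)) (hj : (jb:ℕ) = (ja:ℕ)+1) :
    PEdge n m φ (PVert.v i vs (c ja) ja) (PVert.v i vs (c jb) jb) := by
  have hbja := ja.isLt
  by_cases hcc : c ja = c jb
  · rw [← hcc]
    exact pedge_gadget_same i vs (c ja) ja jb hj
  · by_cases hpar : (ja:ℕ) % 2 = 1
    · have hflip : c jb = !(c ja) := by
        revert hcc; cases c ja <;> cases c jb <;> simp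
      rw [hflip]
      exact pedge_gadget_cross i vs (c ja) ja jb hj hpar
    · have hpar0 : (ja:ℕ) % 2 = 0 := by omega
      rcases hc ja jb hj hpar0 with heq | ⟨ht, hf, hmem⟩
      · exact absurd heq hcc
      · rw [ht, hf]
        have hjam : (ja:ℕ)/2 < m := by omega
        refine pedge_formula i vs ja jb ⟨(ja:ℕ)/2, hjam⟩ hj ?_ (hmem _ ?_) <;>
          · show (ja:ℕ) = 2*((ja:ℕ)/2); omega

lemma lvp_isStPath (hm : 1 ≤ m) (i : Fin n) (vs : Bool) (c : Fin (2*m) → Bool)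
    (hc : GoodPat φ i vs c) : IsStPath n m φ (lvp n m i vs c) := by
  refine ⟨?_, ?_, ?_, fun d => lvp_depth i vs c d⟩
  · unfold lvp; rw [dif_pos (by simp)]
  · unfold lvp; rw [dif_neg (by simp [Fin.last]), dif_neg (by simp [Fin.last])]
  · intro k
    have hkc : ((k.castSucc : Fin (2*m+1+1)) : ℕ) = (k:ℕ) := Fin.coe_castSucc k
    have hks : ((k.succ : Fin (2*m+1+1)) : ℕ) = (k:ℕ)+1 := Fin.val_succ k
    rcases Nat.eq_zero_or_pos (k:ℕ) with h0 | h0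
    · have e1 : lvp n m i vs c k.castSucc = PVert.s := by
        unfold lvp; rw [dif_pos (by omega)]
      rw [e1]
      exact pedge_s _ (by rw [lvp_depth, hks, h0])
    · by_cases hlt : (k:ℕ) < 2*m
      · have e1 : lvp n m i vs c k.castSucc
            = PVert.v i vs (c ⟨(k:ℕ)-1, by omega⟩) ⟨(k:ℕ)-1, by omega⟩ := by
          unfold lvp
          rw [dif_neg (by simp only [Fin.coe_castSucc]; omega),
            dif_pos (by simp only [Fin.coe_castSucc]; omega)]
          simp [hkc]
        have e2 : lvp n m i vs c k.succ
            = PVert.v i vs (c ⟨(k:ℕ), by omega⟩) ⟨(k:ℕ), by omega⟩ := by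
          unfold lvp
          rw [dif_neg (by simp only [Fin.val_succ]; omega),
            dif_pos (by simp only [Fin.val_succ]; omega)]
          simp [hks]
        rw [e1, e2]
        exact pedge_between hc ⟨(k:ℕ)-1, by omega⟩ ⟨(k:ℕ), by omega⟩ (by show (k:ℕ) = (k:ℕ)-1+1; omega)
      · have hi : (k:ℕ) = 2*m := by omega
        have e2 : lvp n m i vs c k.succ = PVert.t := by
          unfold lvp
          rw [dif_neg (by simp only [Fin.val_succ]; omega),
            dif_neg (by simp only [Fin.val_succ]; omega)]
        rw [e2]
        exact pedge_t _ (by rw [lvp_depth, hkc, hi])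

lemma lvp_mid (i : Fin n) (vs : Bool) (c : Fin (2*m) → Bool) (d : Fin (2*m+1+1))
    (h0 : 0 < (d:ℕ)) (h1 : (d:ℕ) ≤ 2*m) :
    lvp n m i vs c d = PVert.v i vs (c ⟨(d:ℕ)-1, by omega⟩) ⟨(d:ℕ)-1, by omega⟩ := by
  unfold lvp; rw [dif_neg (by omega), dif_pos h1]

lemma lvp_cs (i : Fin n) (vs : Bool) (c : Fin (2*m) → Bool) (k : Fin (2*m+1))
    (h0 : 0 < (k:ℕ)) (h1 : (k:ℕ) ≤ 2*m) :
    lvp n m i vs c k.castSucc = PVert.v i vs (c ⟨(k:ℕ)-1, by omega⟩) ⟨(k:ℕ)-1, by omega⟩ := by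
  unfold lvp
  rw [dif_neg (by simp only [Fin.coe_castSucc]; omega),
    dif_pos (by simp only [Fin.coe_castSucc]; omega)]
  simp

lemma lvp_sc (i : Fin n) (vs : Bool) (c : Fin (2*m) → Bool) (k : Fin (2*m+1))
    (h1 : (k:ℕ) < 2*m) :
    lvp n m i vs c k.succ = PVert.v i vs (c ⟨(k:ℕ), by omega⟩) ⟨(k:ℕ), by omega⟩ := by
  unfold lvp
  rw [dif_neg (by simp only [Fin.val_succ]; omega),
    dif_pos (by simp only [Fin.val_succ]; omega)]
  simp

lemma pbP_mid (d : Fin (2*m+1+1)) (h0 : 0 < (d:ℕ)) (h1 : (d:ℕ) ≤ 2*m) :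
    pbP n m d = PVert.beg ⟨(d:ℕ)-1, by omega⟩ := by
  simp only [pbP]; rw [dif_neg (by omega), dif_pos h1]

lemma peP_mid (d : Fin (2*m+1+1)) (h0 : 0 < (d:ℕ)) (h1 : (d:ℕ) ≤ 2*m) :
    peP n m d = PVert.en ⟨(d:ℕ)-1, by omega⟩ := by
  simp only [peP]; rw [dif_neg (by omega), dif_pos h1]

lemma pbP_cs (k : Fin (2*m+1)) (h0 : 0 < (k:ℕ)) (h1 : (k:ℕ) ≤ 2*m) :
    pbP n m k.castSucc = PVert.beg ⟨(k:ℕ)-1, by omega⟩ := by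
  simp only [pbP]
  rw [dif_neg (by simp only [Fin.coe_castSucc]; omega),
    dif_pos (by simp only [Fin.coe_castSucc]; omega)]
  simp

lemma pbP_sc (k : Fin (2*m+1)) (h1 : (k:ℕ) < 2*m) :
    pbP n m k.succ = PVert.beg ⟨(k:ℕ), by omega⟩ := by
  simp only [pbP]
  rw [dif_neg (by simp only [Fin.val_succ]; omega),
    dif_pos (by simp only [Fin.val_succ]; omega)]
  simp

lemma peP_cs (k : Fin (2*m+1)) (h0 : 0 < (k:ℕ)) (h1 : (k:ℕ) ≤ 2*m) :
    peP n m k.castSucc = PVert.en ⟨(k:ℕ)-1, by omega⟩ := by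
  simp only [peP]
  rw [dif_neg (by simp only [Fin.coe_castSucc]; omega),
    dif_pos (by simp only [Fin.coe_castSucc]; omega)]
  simp

lemma pbP_depth (d : Fin (2*m+1+1)) : ((pbP n m) d).depth = (d:ℕ) := by
  have := d.isLt
  simp only [pbP]
  split_ifs with h1 h2 <;> simp [PVert.depth] <;> omega

lemma peP_depth (d : Fin (2*m+1+1)) : ((peP n m) d).depth = (d:ℕ) := by
  have := d.isLt
  simp only [peP]
  split_ifs with h1 h2 <;> simp [PVert.depth] <;> omega

lemma pbP_isStPath (hm : 1 ≤ m) : IsStPath n m φ (pbP n m) := by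
  refine ⟨?_, ?_, ?_, pbP_depth⟩
  · simp only [pbP]; rw [dif_pos (by simp)]
  · simp only [pbP]
    rw [dif_neg (by simp only [Fin.val_last]; omega), dif_neg (by simp only [Fin.val_last]; omega)]
  · intro k
    have hkc : ((k.castSucc : Fin (2*m+1+1)) : ℕ) = (k:ℕ) := Fin.coe_castSucc k
    have hks : ((k.succ : Fin (2*m+1+1)) : ℕ) = (k:ℕ)+1 := Fin.val_succ k
    rcases Nat.eq_zero_or_pos (k:ℕ) with h0 | h0
    · have e1 : pbP n m k.castSucc = PVert.s := by
        simp only [pbP]; rw [dif_pos (by simp only [Fin.coe_castSucc]; omega)]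
      rw [e1]
      exact pedge_s _ (by rw [pbP_depth, hks, h0])
    · by_cases hlt : (k:ℕ) < 2*m
      · rw [pbP_cs k h0 (by omega), pbP_sc k hlt]
        exact pedge_beg _ _ (show (k:ℕ) = (k:ℕ)-1+1 by omega)
      · have hi : (k:ℕ) = 2*m := by omega
        have e2 : pbP n m k.succ = PVert.t := by
          simp only [pbP]
          rw [dif_neg (by simp only [Fin.val_succ]; omega),
            dif_neg (by simp only [Fin.val_succ]; omega)]
        rw [e2]
        exact pedge_t _ (by rw [pbP_depth, hkc, hi])

lemma peP_isStPath (hm : 1 ≤ m) : IsStPath n m φ (peP n m) := by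
  refine ⟨?_, ?_, ?_, peP_depth⟩
  · simp only [peP]; rw [dif_pos (by simp)]
  · simp only [peP]
    rw [dif_neg (by simp only [Fin.val_last]; omega), dif_neg (by simp only [Fin.val_last]; omega)]
  · intro k
    have hkc : ((k.castSucc : Fin (2*m+1+1)) : ℕ) = (k:ℕ) := Fin.coe_castSucc k
    have hks : ((k.succ : Fin (2*m+1+1)) : ℕ) = (k:ℕ)+1 := Fin.val_succ k
    rcases Nat.eq_zero_or_pos (k:ℕ) with h0 | h0
    · have e1 : peP n m k.castSucc = PVert.s := by
        simp only [peP]; rw [dif_pos (by simp only [Fin.coe_castSucc]; omega)]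
      rw [e1]
      exact pedge_s _ (by rw [peP_depth, hks, h0])
    · by_cases hlt : (k:ℕ) < 2*m
      · have e2 : peP n m k.succ = PVert.en ⟨(k:ℕ), by omega⟩ := by
          simp only [peP]
          rw [dif_neg (by simp only [Fin.val_succ]; omega),
            dif_pos (by simp only [Fin.val_succ]; omega)]
          simp
        rw [peP_cs k h0 (by omega), e2]
        exact pedge_en _ _ (show (k:ℕ) = (k:ℕ)-1+1 by omega)
      · have hi : (k:ℕ) = 2*m := by omega
        have e2 : peP n m k.succ = PVert.t := by
          simp only [peP]
          rw [dif_neg (by simp only [Fin.val_succ]; omega),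
            dif_neg (by simp only [Fin.val_succ]; omega)]
        rw [e2]
        exact pedge_t _ (by rw [peP_depth, hkc, hi])

lemma sweep_beg (hm : 1 ≤ m) (i0 : Fin n) (hi0 : (i0:ℕ) = 0) (vs : Bool)
    (c : Fin (2*m) → Bool) (hc : ∀ j, c j = false) :
    Reconf n m φ (2*m) (pbP n m) (lvp n m i0 vs c) := by
  have hgood : GoodPat φ i0 vs c :=
    constPat_goodPat (fun a b _ _ => (hc a).trans (hc b).symm) i0 vs
  refine reconf_sweep (pbP_isStPath hm) (lvp_isStPath hm i0 vs c hgood) ?_ ?_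
  · intro k hk0 hk
    rw [lvp_cs i0 vs _ k hk0 (by omega), pbP_sc k hk, hc]
    exact pedge_vbeg i0 vs _ _ hi0 (show (k:ℕ) = (k:ℕ)-1+1 by omega)
  · intro d hd0 hd
    rw [pbP_mid d hd0 (by omega), lvp_mid i0 vs _ d hd0 (by omega)]
    simp

lemma sweep_en (hm : 1 ≤ m) (iN : Fin n) (hiN : (iN:ℕ)+1 = n) (vs : Bool)
    (c : Fin (2*m) → Bool) (hc : ∀ j, c j = true) :
    Reconf n m φ (2*m) (lvp n m iN vs c) (peP n m) := by
  have hgood : GoodPat φ iN vs c :=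
    constPat_goodPat (fun a b _ _ => (hc a).trans (hc b).symm) iN vs
  refine reconf_sweep (lvp_isStPath hm iN vs c hgood) (peP_isStPath hm) ?_ ?_
  · intro k hk0 hk
    rw [peP_cs k hk0 (by omega), lvp_sc iN vs _ k hk, hc]
    exact pedge_env iN vs _ _ hiN (show (k:ℕ) = (k:ℕ)-1+1 by omega)
  · intro d hd0 hd
    rw [peP_mid d hd0 (by omega), lvp_mid iN vs _ d hd0 (by omega)]
    simp

lemma pedge_lift {c : Fin (2*m) → Bool} (hcp : ConstPat c) (ihi ilo : Fin n)
    (hl : (ihi:ℕ) = (ilo:ℕ)+1) (vshi vslo : Bool) (ja jb : Fin (2*m))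
    (hj : (jb:ℕ) = (ja:ℕ)+1) :
    PEdge n m φ (PVert.v ihi vshi (c ja) ja) (PVert.v ilo vslo (c jb) jb) := by
  by_cases hcc : c ja = c jb
  · rw [← hcc]
    exact pedge_inter_same ihi ilo vshi vslo (c ja) ja jb hl hj
  · have hpar : (ja:ℕ) % 2 = 1 := by
      by_contra hp
      exact hcc (hcp ja jb hj (by omega))
    have hflip : c jb = !(c ja) := by
      revert hcc
      cases c ja <;> cases c jb <;> simp
    rw [hflip]
    exact pedge_inter_cross ihi ilo vshi vslo (c ja) ja jb hl hj hpar

lemma sweep_lift (hm : 1 ≤ m) (ilo ihi : Fin n) (hl : (ihi:ℕ) = (ilo:ℕ)+1)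
    (vslo vshi : Bool) (c : Fin (2*m) → Bool) (hcp : ConstPat c) :
    Reconf n m φ (2*m) (lvp n m ilo vslo c) (lvp n m ihi vshi c) := by
  refine reconf_sweep (lvp_isStPath hm ilo vslo c (constPat_goodPat hcp ilo vslo))
    (lvp_isStPath hm ihi vshi c (constPat_goodPat hcp ihi vshi)) ?_ ?_
  · intro k hk0 hk
    rw [lvp_cs ihi vshi c k hk0 (by omega), lvp_sc ilo vslo c k hk]
    exact pedge_lift hcp ihi ilo hl vshi vslo ⟨(k:ℕ)-1, by omega⟩ ⟨(k:ℕ), by omega⟩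
      (show (k:ℕ) = (k:ℕ)-1+1 by omega)
  · intro d hd0 hd
    rw [lvp_mid ilo vslo c d hd0 (by omega), lvp_mid ihi vshi c d hd0 (by omega)]
    intro h
    have := congrArg PVert.level h
    simp only [PVert.level] at this
    omega

/-- The c-state pattern induced by a per-clause-block boolean assignment. -/
def cD {m : ℕ} (D : Fin m → Bool) : Fin (2*m) → Bool :=
  fun j => D ⟨(j:ℕ)/2, by have := j.isLt; omega⟩

lemma cD_const {m : ℕ} (D : Fin m → Bool) : ConstPat (cD D) := by
  intro a b hb ha
  exact congrArg D (Fin.ext (show (a:ℕ)/2 = (b:ℕ)/2 by omega))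


lemma lvp_diffOne (i : Fin n) (vs : Bool) (c c' : Fin (2*m) → Bool) (j0 : Fin (2*m))
    (hne : c j0 ≠ c' j0) (heq : ∀ j : Fin (2*m), j ≠ j0 → c j = c' j) :
    DiffOne (lvp n m i vs c) (lvp n m i vs c') := by
  refine ⟨⟨(j0:ℕ)+1, by omega⟩, ?_, ?_⟩
  · have e : ∀ cc : Fin (2*m) → Bool, lvp n m i vs cc ⟨(j0:ℕ)+1, by omega⟩
        = PVert.v i vs (cc j0) j0 := by
      intro cc
      unfold lvp
      rw [dif_neg (by simp), dif_pos (by simp; try omega)]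
      congr 1 <;> try exact Fin.ext (by simp)
    rw [e c, e c']
    simp only [ne_eq, PVert.v.injEq]
    intro h
    exact hne h.2.2.1
  · intro d hd
    have hdv : (d:ℕ) ≠ (j0:ℕ)+1 := fun hx => hd (Fin.ext hx)
    unfold lvp
    split_ifs with h1 h2
    · rfl
    · have : (⟨(d:ℕ)-1, by omega⟩ : Fin (2*m)) ≠ j0 := by
        intro hx
        apply hdv
        have := congrArg Fin.val hx
        simp at this
        omega
      rw [heq _ this]
    · rfl

lemma cD_eval {m : ℕ} (E : Fin m → Bool) (j : Fin (2*m)) (jc : Fin m)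
    (h : (j:ℕ)/2 = (jc:ℕ)) : cD E j = E jc :=
  congrArg E (Fin.ext h)

lemma flip_block (hm : 1 ≤ m) (i : Fin n) (vs : Bool) (jc0 : Fin m)
    (hmem : (i, vs) ∈ φ jc0) (D : Fin m → Bool) (hD : D jc0 = false) :
    Reconf n m φ 2 (lvp n m i vs (cD D))
      (lvp n m i vs (cD (fun jc => if jc = jc0 then true else D jc))) := by
  have hjc0 := jc0.isLt
  have hgoodh : GoodPat φ i vs (fun j => if (j:ℕ) = 2*(jc0:ℕ) then true else cD D j) := by
    intro a b hb ha
    by_cases hA : (a:ℕ) = 2*(jc0:ℕ)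
    · right
      refine ⟨?_, ?_, ?_⟩
      · show (if (a:ℕ) = 2*(jc0:ℕ) then true else cD D a) = true
        rw [if_pos hA]
      · show (if (b:ℕ) = 2*(jc0:ℕ) then true else cD D b) = false
        rw [if_neg (by omega), cD_eval D b jc0 (by omega)]
        exact hD
      · intro jc hjc
        have he : jc = jc0 := Fin.ext (by omega)
        rw [he]; exact hmem
    · left
      show (if (a:ℕ) = 2*(jc0:ℕ) then true else cD D a)
          = (if (b:ℕ) = 2*(jc0:ℕ) then true else cD D b)
      rw [if_neg hA, if_neg (show ¬((b:ℕ) = 2*(jc0:ℕ)) by omega)]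
      exact cD_const D a b hb ha
  have step1 : Reconf n m φ 1 (lvp n m i vs (cD D))
      (lvp n m i vs (fun j => if (j:ℕ) = 2*(jc0:ℕ) then true else cD D j)) := by
    refine reconf_single (lvp_isStPath hm i vs _ (constPat_goodPat (cD_const D) i vs))
      (lvp_isStPath hm i vs _ hgoodh)
      (lvp_diffOne i vs _ _ ⟨2*(jc0:ℕ), by omega⟩ ?_ ?_)
    · rw [cD_eval D _ jc0 (by simp; try omega), hD]
      simp
    · intro j hj
      have hjv : (j:ℕ) ≠ 2*(jc0:ℕ) := fun hx => hj (Fin.ext (by simp [hx]))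
      show cD D j = (if (j:ℕ) = 2*(jc0:ℕ) then true else cD D j)
      rw [if_neg hjv]
  have step2 : Reconf n m φ 1
      (lvp n m i vs (fun j => if (j:ℕ) = 2*(jc0:ℕ) then true else cD D j))
      (lvp n m i vs (cD (fun jc => if jc = jc0 then true else D jc))) := by
    refine reconf_single (lvp_isStPath hm i vs _ hgoodh)
      (lvp_isStPath hm i vs _ (constPat_goodPat (cD_const _) i vs))
      (lvp_diffOne i vs _ _ ⟨2*(jc0:ℕ)+1, by omega⟩ ?_ ?_)
    · show (if ((⟨2*(jc0:ℕ)+1, by omega⟩ : Fin (2*m)):ℕ) = 2*(jc0:ℕ) then true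
          else cD D ⟨2*(jc0:ℕ)+1, by omega⟩)
          ≠ cD (fun jc => if jc = jc0 then true else D jc) ⟨2*(jc0:ℕ)+1, by omega⟩
      rw [if_neg (by simp; try omega), cD_eval D _ jc0 (by simp; try omega), hD,
        cD_eval (fun jc => if jc = jc0 then true else D jc) _ jc0 (by simp; try omega)]
      simp
    · intro j hj
      have hjlt := j.isLt
      have hjv : (j:ℕ) ≠ 2*(jc0:ℕ)+1 := fun hx => hj (Fin.ext (by simp [hx]))
      show (if (j:ℕ) = 2*(jc0:ℕ) then true else cD D j)
          = cD (fun jc => if jc = jc0 then true else D jc) j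
      have hh : (j:ℕ)/2 < m := by omega
      by_cases hA : (j:ℕ) = 2*(jc0:ℕ)
      · rw [if_pos hA, cD_eval (fun jc => if jc = jc0 then true else D jc) j jc0 (by omega)]
        rw [if_pos rfl]
      · have hne2 : (⟨(j:ℕ)/2, hh⟩ : Fin m) ≠ jc0 := by
          intro hx
          have := congrArg Fin.val hx
          simp at this
          omega
        rw [if_neg hA, cD_eval D j ⟨(j:ℕ)/2, hh⟩ rfl,
          cD_eval (fun jc => if jc = jc0 then true else D jc) j ⟨(j:ℕ)/2, hh⟩ rfl]
        show D _ = if (⟨(j:ℕ)/2, hh⟩ : Fin m) = jc0 then true else D (⟨(j:ℕ)/2, hh⟩ : Fin m)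
        rw [if_neg hne2]
  have := reconf_trans step1 step2
  simpa using this

/-- Boolean version of `F` on `ℕ`. -/
def Fb (m : ℕ) (F : Fin m → Bool) : ℕ → Bool := fun a => if h : a < m then F ⟨a, h⟩ else false

/-- Number of `a < k` with `F a`. -/
def cnt (m : ℕ) (F : Fin m → Bool) (k : ℕ) : ℕ :=
  ((Finset.range k).filter (fun a => Fb m F a = true)).card

lemma cnt_succ (F : Fin m → Bool) (k : ℕ) :
    cnt m F (k+1) = if Fb m F k = true then cnt m F k + 1 else cnt m F k := by
  unfold cnt
  rw [Finset.range_add_one, Finset.filter_insert]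
  split_ifs with h
  · rw [Finset.card_insert_of_notMem (by simp)]
  · rfl

lemma flips (hm : 1 ≤ m) (i : Fin n) (vs : Bool) (F D : Fin m → Bool)
    (hF : ∀ jc, F jc = true → (i, vs) ∈ φ jc)
    (hD : ∀ jc, F jc = true → D jc = false) :
    ∀ k, k ≤ m → Reconf n m φ (2 * cnt m F k) (lvp n m i vs (cD D))
      (lvp n m i vs (cD (fun jc => D jc || (F jc && decide ((jc:ℕ) < k))))) := by
  intro k
  induction k with
  | zero =>
    intro _
    have he : (fun jc : Fin m => D jc || (F jc && decide ((jc:ℕ) < 0))) = D := by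
      funext jc; simp
    rw [he]
    exact reconf_mono
      (reconf_refl (lvp_isStPath hm i vs _ (constPat_goodPat (cD_const D) i vs))) (by omega)
  | succ k ih =>
    intro hk
    have hkm : k < m := hk
    by_cases hf : F ⟨k, hkm⟩ = true
    · have hDk : (fun jc : Fin m => D jc || (F jc && decide ((jc:ℕ) < k))) ⟨k, hkm⟩ = false := by
        simp [hD _ hf]
      have hstep := flip_block hm i vs ⟨k, hkm⟩ (hF _ hf)
        (fun jc => D jc || (F jc && decide ((jc:ℕ) < k))) hDk
      have hpat : (fun jc : Fin m => if jc = ⟨k, hkm⟩ then true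
            else D jc || (F jc && decide ((jc:ℕ) < k)))
          = (fun jc => D jc || (F jc && decide ((jc:ℕ) < k+1))) := by
        funext jc
        by_cases hj : jc = ⟨k, hkm⟩
        · subst hj
          simp [hD _ hf, hf]
        · have hjv : (jc:ℕ) ≠ k := fun hx => hj (Fin.ext hx)
          rw [if_neg hj, decide_eq_decide.mpr (show ((jc:ℕ) < k+1) ↔ ((jc:ℕ) < k) by omega)]
      rw [hpat] at hstep
      have hc : cnt m F (k+1) = cnt m F k + 1 := by
        rw [cnt_succ, if_pos (by simp [Fb, hkm, hf])]
      have hcomb := reconf_trans (ih (by omega)) hstep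
      rw [hc]
      exact reconf_mono hcomb (by omega)
    · have hfx : F ⟨k, hkm⟩ = false := by
        revert hf; cases F ⟨k, hkm⟩ <;> simp
      have hpat : (fun jc : Fin m => D jc || (F jc && decide ((jc:ℕ) < k)))
          = (fun jc => D jc || (F jc && decide ((jc:ℕ) < k+1))) := by
        funext jc
        by_cases hj : jc = ⟨k, hkm⟩
        · subst hj
          simp [hfx]
        · have hjv : (jc:ℕ) ≠ k := fun hx => hj (Fin.ext hx)
          rw [decide_eq_decide.mpr (show ((jc:ℕ) < k+1) ↔ ((jc:ℕ) < k) by omega)]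
      have hc : cnt m F (k+1) = cnt m F k := by
        rw [cnt_succ, if_neg (by simp [Fb, hkm, hfx])]
      rw [hc, ← hpat]
      exact ih (by omega)

/-- The witness function as a total function on `ℕ`. -/
def Wn (n m : ℕ) (w : Fin m → Fin n) : ℕ → ℕ := fun a => if h : a < m then (w ⟨a, h⟩ : ℕ) else n

/-- Number of clauses whose witness has level at most `i`. -/
def Kc (n m : ℕ) (w : Fin m → Fin n) (i : ℕ) : ℕ :=
  ((Finset.range m).filter (fun a => Wn n m w a ≤ i)).card

lemma cnt_eq (w : Fin m → Fin n) (i : ℕ) :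
    cnt m (fun jc => decide ((w jc : ℕ) = i)) m
      = ∑ a ∈ Finset.range m, (if Wn n m w a = i then 1 else 0) := by
  unfold cnt
  rw [Finset.card_filter]
  refine Finset.sum_congr rfl ?_
  intro a ha
  rw [Finset.mem_range] at ha
  simp [Fb, Wn, ha]

lemma Kc_zero (w : Fin m → Fin n) :
    Kc n m w 0 = cnt m (fun jc => decide ((w jc : ℕ) = 0)) m := by
  unfold Kc
  rw [Finset.card_filter, cnt_eq]
  refine Finset.sum_congr rfl ?_
  intro a _
  split_ifs <;> omega

lemma Kc_succ (w : Fin m → Fin n) (i : ℕ) :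
    Kc n m w (i+1) = Kc n m w i + cnt m (fun jc => decide ((w jc : ℕ) = i+1)) m := by
  unfold Kc
  rw [Finset.card_filter, Finset.card_filter, cnt_eq, ← Finset.sum_add_distrib]
  refine Finset.sum_congr rfl ?_
  intro a _
  split_ifs <;> omega

lemma Kc_le (w : Fin m → Fin n) (i : ℕ) : Kc n m w i ≤ m :=
  le_trans (Finset.card_filter_le _ _) (le_of_eq (Finset.card_range m))

lemma decide_or2 (x y : ℕ) : (decide (x ≤ y) || decide (x = y+1)) = decide (x ≤ y+1) := by
  by_cases h1 : x ≤ y <;> by_cases h2 : x = y+1 <;> simp [h1, h2] <;> omega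


end Aux

/-- if `φ` is satisfiable, then there is a reconfiguration sequence from
`p_b` to `p_e` in `G_φ` of length at most `2m(n+2)`. -/
theorem stmt7 (n m : ℕ) (hn : 1 ≤ n) (hm : 1 ≤ m) (φ : Fin m → Finset (Fin n × Bool))
    (hsat : ∃ θ : Fin n → Bool, ∀ jc : Fin m, ∃ i : Fin n, (i, θ i) ∈ φ jc) :
    ∃ ℓ ≤ 2 * m * (n + 2), ∃ ρ : ℕ → (Fin (2 * m + 1 + 1) → PVert n m),
      PReconfSeq n m φ ρ ℓ (pbP n m) (peP n m) := by
  obtain ⟨θ, hθ⟩ := hsat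
  choose w hw using hθ
  have main : ∀ i : ℕ, ∀ hi : i < n, Reconf n m φ ((i+1)*(2*m) + 2 * Kc n m w i) (pbP n m)
      (lvp n m ⟨i, hi⟩ (θ ⟨i, hi⟩) (cD (fun jc => decide ((w jc : ℕ) ≤ i)))) := by
    intro i
    induction i with
    | zero =>
      intro hi
      have h1 := sweep_beg (φ := φ) hm ⟨0, hi⟩ rfl (θ ⟨0, hi⟩)
        (cD (fun _ : Fin m => false)) (fun _ => rfl)
      have h2 := flips (φ := φ) hm ⟨0, hi⟩ (θ ⟨0, hi⟩)
        (fun jc => decide ((w jc : ℕ) = 0)) (fun _ => false)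
        (fun jc hjc => by
          have hx : (w jc : ℕ) = 0 := by simpa using hjc
          have he : w jc = ⟨0, hi⟩ := Fin.ext hx
          rw [← he]; exact hw jc)
        (fun _ _ => rfl) m le_rfl
      beta_reduce at h2
      have hq : lvp n m ⟨0, hi⟩ (θ ⟨0, hi⟩)
            (cD (fun jc => false || (decide ((w jc : ℕ) = 0) && decide ((jc:ℕ) < m))))
          = lvp n m ⟨0, hi⟩ (θ ⟨0, hi⟩) (cD (fun jc => decide ((w jc : ℕ) ≤ 0))) :=
        congrArg _ (congrArg cD (funext fun jc => by
          have hlt : decide ((jc:ℕ) < m) = true := decide_eq_true jc.isLt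
          rw [hlt, Bool.and_true, Bool.false_or,
            decide_eq_decide.mpr (show ((w jc:ℕ) = 0) ↔ ((w jc:ℕ) ≤ 0) by omega)]))
      rw [hq] at h2
      have hcomb := reconf_trans h1 h2
      refine reconf_mono hcomb (le_of_eq ?_)
      rw [Kc_zero w]
      ring
    | succ i ih =>
      intro hi
      have hi' : i < n := by omega
      have hprev := ih hi'
      have hlift := sweep_lift (φ := φ) hm ⟨i, hi'⟩ ⟨i+1, hi⟩ rfl (θ ⟨i, hi'⟩) (θ ⟨i+1, hi⟩)
        (cD (fun jc => decide ((w jc : ℕ) ≤ i))) (cD_const _)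
      have hflips := flips (φ := φ) hm ⟨i+1, hi⟩ (θ ⟨i+1, hi⟩)
        (fun jc => decide ((w jc : ℕ) = i+1)) (fun jc => decide ((w jc : ℕ) ≤ i))
        (fun jc hjc => by
          have hx : (w jc : ℕ) = i+1 := by simpa using hjc
          have he : w jc = ⟨i+1, hi⟩ := Fin.ext hx
          rw [← he]; exact hw jc)
        (fun jc hjc => by
          have hx : (w jc : ℕ) = i+1 := by simpa using hjc
          simp [hx]) m le_rfl
      beta_reduce at hflips
      have hq : lvp n m ⟨i+1, hi⟩ (θ ⟨i+1, hi⟩)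
            (cD (fun jc => decide ((w jc : ℕ) ≤ i)
              || (decide ((w jc : ℕ) = i+1) && decide ((jc:ℕ) < m))))
          = lvp n m ⟨i+1, hi⟩ (θ ⟨i+1, hi⟩) (cD (fun jc => decide ((w jc : ℕ) ≤ i+1))) :=
        congrArg _ (congrArg cD (funext fun jc => by
          have hlt : decide ((jc:ℕ) < m) = true := decide_eq_true jc.isLt
          rw [hlt, Bool.and_true, decide_or2]))
      rw [hq] at hflips
      have hcomb := reconf_trans (reconf_trans hprev hlift) hflips
      refine reconf_mono hcomb (le_of_eq ?_)
      rw [Kc_succ]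
      ring
  have hn1 : n - 1 < n := by omega
  have hlast := main (n-1) hn1
  have hend := sweep_en (φ := φ) hm ⟨n-1, hn1⟩ (show (n-1)+1 = n by omega) (θ ⟨n-1, hn1⟩)
    (cD (fun jc => decide ((w jc : ℕ) ≤ n-1)))
    (fun j => decide_eq_true (by
      have := (w ⟨(j:ℕ)/2, by have := j.isLt; omega⟩).isLt
      omega))
  have hfull := reconf_trans hlast hend
  obtain ⟨ℓ, hℓ, ρ, hρ⟩ := hfull
  refine ⟨ℓ, ?_, ρ, hρ⟩
  have hK : Kc n m w (n-1) ≤ m := Kc_le w (n-1)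
  have h2 : (n-1+1)*(2*m) = n * (2*m) := by congr 1; omega
  calc ℓ ≤ (n-1+1)*(2*m) + 2 * Kc n m w (n-1) + 2*m := hℓ
    _ = n*(2*m) + 2*Kc n m w (n-1) + 2*m := by rw [h2]
    _ ≤ n*(2*m) + 2*m + 2*m :=
        Nat.add_le_add_right (Nat.add_le_add_left (by omega) _) _
    _ = 2*m*(n+2) := by ring
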